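/- The specialized extended q-binomial coefficient is q-holonomic in three variables (Lemma 6.2(c)): the function K : ℤ³ → ℚ(q) is q-holonomic. -/

import Mathlib

open scoped BigOperators

noncomputable section

/-- The operator `M^α L^β` acting on functions `ℤ^r → V`:
`(M^α L^β f)(n) = q^(α·n) • f(n + β)`, where `q = X ∈ R = k(q) = RatFunc k`. -/
def shiftZ (k : Type) [Field k] {V : Type} [AddCommGroup V] [Module (RatFunc k) V]
    {r : ℕ} (α β : Fin r → ℕ) (f : (Fin r → ℤ) → V) : (Fin r → ℤ) → V :=
  fun n => ((RatFunc.X : RatFunc k) ^ (∑ i, (α i : ℤ) * n i)) • f (fun i => n i + (β i : ℤ))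

/-- The subspace `F_m f` spanned by the `M^α L^β f` with `|α| + |β| ≤ m`. -/
def FmZ (k : Type) [Field k] {V : Type} [AddCommGroup V] [Module (RatFunc k) V]
    {r : ℕ} (m : ℕ) (f : (Fin r → ℤ) → V) : Submodule (RatFunc k) ((Fin r → ℤ) → V) :=
  Submodule.span (RatFunc k)
    { g | ∃ α β : Fin r → ℕ, (∑ i, α i) + (∑ i, β i) ≤ m ∧ g = shiftZ k α β f }

/-- `f : ℤ^r → V` is q-holonomic if each `F_m f` is finite dimensional over `R = k(q)`
and there is a constant `C` with `dim_R F_m f ≤ C (m+1)^r` for all `m`. -/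
def IsQHolonomicZ (k : Type) [Field k] {V : Type} [AddCommGroup V] [Module (RatFunc k) V]
    {r : ℕ} (f : (Fin r → ℤ) → V) : Prop :=
  (∀ m : ℕ, FiniteDimensional (RatFunc k) (FmZ k m f)) ∧
  ∃ C : ℕ, ∀ m : ℕ, Module.finrank (RatFunc k) (FmZ k m f) ≤ C * (m + 1) ^ r

/-- The function `K : ℤ³ → ℚ(q)`: `K(n,k,ℓ) = 0` for `k < 0` and
`K(n,k,ℓ) = Π_{j=1}^{k} (q^{ℓ+n−j+1} − q^{−ℓ−n+j−1})/(q^j − q^{−j})` for `k ≥ 0`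
(the extended q-binomial coefficient with `x = q^ℓ`). -/
def Kfun : (Fin 3 → ℤ) → RatFunc ℚ := fun p =>
  if 0 ≤ p 1 then
    ∏ j ∈ Finset.range (p 1).toNat,
      ((RatFunc.X : RatFunc ℚ) ^ (p 2 + p 0 - (j : ℤ)) -
        (RatFunc.X : RatFunc ℚ) ^ (-(p 2 + p 0 - (j : ℤ)))) /
      ((RatFunc.X : RatFunc ℚ) ^ ((j : ℤ) + 1) -
        (RatFunc.X : RatFunc ℚ) ^ (-((j : ℤ) + 1)))
  else 0

/- ======================================================================
   Auxiliary development for the proof of `qholonomic_K`.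
   ====================================================================== -/

set_option maxHeartbeats 1000000
set_option synthInstance.maxHeartbeats 400000

open scoped Classical

namespace QHolK
open Finset

abbrev FF := RatFunc ℚ
abbrev V3 := (Fin 3 → ℤ) → FF

def XX : FF := RatFunc.X

lemma XX_ne_zero : XX ≠ 0 := RatFunc.X_ne_zero

def cc (z : ℤ) : FF := XX ^ z - XX ^ (-z)

lemma XX_pow_ne_one {n : ℕ} (hn : n ≠ 0) : XX ^ n ≠ 1 := by
  intro h
  have h2 : (algebraMap (Polynomial ℚ) (RatFunc ℚ)) (Polynomial.X ^ n) =
      (algebraMap (Polynomial ℚ) (RatFunc ℚ)) 1 := by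
    simpa [XX, map_pow, RatFunc.algebraMap_X] using h
  have h3 := RatFunc.algebraMap_injective ℚ h2
  have := congrArg Polynomial.natDegree h3
  simp [Polynomial.natDegree_X_pow] at this
  exact hn this

lemma XX_zpow_ne_one {z : ℤ} (hz : z ≠ 0) : XX ^ z ≠ 1 := by
  rcases lt_or_gt_of_ne hz with h | h
  · intro hXz
    have h1 : XX ^ (-z) = 1 := by
      rw [zpow_neg, hXz, inv_one]
    have h2 : XX ^ ((-z).toNat) = 1 := by
      rw [← zpow_natCast, Int.toNat_of_nonneg (by omega)]; exact h1
    exact XX_pow_ne_one (by omega) h2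
  · intro hXz
    have h2 : XX ^ (z.toNat) = 1 := by
      rw [← zpow_natCast, Int.toNat_of_nonneg (by omega)]; exact hXz
    exact XX_pow_ne_one (by omega) h2

lemma cc_ne_zero {z : ℤ} (hz : z ≠ 0) : cc z ≠ 0 := by
  intro h
  have h1 : XX ^ z = XX ^ (-z) := sub_eq_zero.mp h
  have h2 : XX ^ (2 * z) = 1 := by
    have := congrArg (fun w => w * XX ^ z) h1
    rw [← zpow_add₀ XX_ne_zero, ← zpow_add₀ XX_ne_zero] at this
    simpa [two_mul] using this
  exact XX_zpow_ne_one (by omega) h2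

lemma cc_zero : cc 0 = 0 := by simp [cc]

def f1 (M : ℤ) (a : ℕ) : FF := ∏ j ∈ range a, cc (M - j)
def dd (a : ℕ) : FF := ∏ j ∈ range a, cc ((j : ℤ) + 1)

lemma dd_ne_zero (a : ℕ) : dd a ≠ 0 := by
  apply prod_ne_zero_iff.mpr
  intro j _
  exact cc_ne_zero (by omega)

lemma f1_add (M : ℤ) (a b : ℕ) :
    f1 M (a + b) = f1 M a * ∏ j ∈ range b, cc (M - a - j) := by
  rw [f1, prod_range_add]
  congr 1
  apply prod_congr rfl
  intro j _
  congr 1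
  push_cast
  ring

lemma dd_add (a b : ℕ) :
    dd (a + b) = dd a * ∏ j ∈ range b, cc ((a : ℤ) + 1 + j) := by
  rw [dd, prod_range_add]
  congr 1
  apply prod_congr rfl
  intro j _
  congr 1
  push_cast
  ring

lemma prod_shift_reflect (M : ℤ) (s : ℕ) :
    ∏ j ∈ range s, cc (M - j) = ∏ i ∈ range s, cc (M - s + 1 + i) := by
  rw [← prod_range_reflect]
  apply prod_congr rfl
  intro j hj
  simp only [mem_range] at hj
  congr 1
  have : ((s - 1 - j : ℕ) : ℤ) = (s : ℤ) - 1 - j := by omega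
  rw [this]; ring

lemma f1_shift (M : ℤ) (a s : ℕ) :
    f1 (M + s) a * ∏ i ∈ range s, cc (M - a + 1 + i) =
    f1 M a * ∏ i ∈ range s, cc (M + 1 + i) := by
  have h1 : f1 (M + s) (a + s) = f1 (M + s) a * ∏ i ∈ range s, cc (M - a + 1 + i) := by
    rw [f1_add]
    congr 1
    have := prod_shift_reflect (M + s - a) s
    simp only [show M + s - a - s + 1 = M - a + 1 by ring] at this
    rw [← this]
  have h2 : f1 (M + s) (s + a) = (∏ i ∈ range s, cc (M + 1 + i)) * f1 M a := by
    rw [f1, prod_range_add]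
    congr 1
    · have := prod_shift_reflect (M + s) s
      simp only [show M + s - s + 1 = M + 1 by ring] at this
      rw [← this]
    · apply prod_congr rfl; intro j _; congr 1; push_cast; ring
  rw [← h1, show a + s = s + a by ring, h2, mul_comm]

lemma f1_sym (A : ℤ) (b : ℕ) (hA : 0 ≤ A) (hb : (b : ℤ) ≤ A) :
    f1 A b * dd (A - b).toNat = dd A.toNat := by
  have hab : A.toNat = (A - b).toNat + b := by omega
  rw [hab, dd_add]
  rw [mul_comm]
  congr 1
  rw [f1, prod_shift_reflect A b]
  apply prod_congr rfl
  intro i _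
  congr 1
  omega

lemma key34 (A : ℤ) (K s t m : ℕ) (hs : s ≤ m) (ht : t ≤ m)
    (hq1 : ∀ i : ℕ, i < m → A - K + 1 + i ≠ 0) :
    f1 (A + s) (K + t) / dd (K + t) =
    ((∏ i ∈ range s, cc (A + 1 + i)) * (∏ j ∈ range t, cc (A + s - K - j)) *
     (∏ i ∈ Ico s m, cc (A - K + 1 + i)) * (∏ j ∈ Ico t m, cc ((K : ℤ) + 1 + j))) *
    ((f1 A K / dd K) /
      ((∏ i ∈ range m, cc (A - K + 1 + i)) * ∏ j ∈ range m, cc ((K : ℤ) + 1 + j))) := by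
  have hQ1 : (∏ i ∈ range m, cc (A - K + 1 + i)) =
      (∏ i ∈ range s, cc (A - K + 1 + i)) * (∏ i ∈ Ico s m, cc (A - K + 1 + i)) := by
    rw [range_eq_Ico, ← prod_Ico_consecutive _ (Nat.zero_le s) hs, ← range_eq_Ico]
  have hQ2 : (∏ j ∈ range m, cc ((K : ℤ) + 1 + j)) =
      (∏ j ∈ range t, cc ((K : ℤ) + 1 + j)) * (∏ j ∈ Ico t m, cc ((K : ℤ) + 1 + j)) := by
    rw [range_eq_Ico, ← prod_Ico_consecutive _ (Nat.zero_le t) ht, ← range_eq_Ico]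
  have hq1s : (∏ i ∈ range s, cc (A - K + 1 + i)) ≠ 0 := by
    apply prod_ne_zero_iff.mpr
    intro i hi
    exact cc_ne_zero (hq1 i (lt_of_lt_of_le (mem_range.mp hi) hs))
  have hC3 : (∏ i ∈ Ico s m, cc (A - K + 1 + i)) ≠ 0 := by
    apply prod_ne_zero_iff.mpr
    intro i hi
    exact cc_ne_zero (hq1 i (mem_Ico.mp hi).2)
  have hq2t : (∏ j ∈ range t, cc ((K : ℤ) + 1 + j)) ≠ 0 := by
    apply prod_ne_zero_iff.mpr
    intro j _
    exact cc_ne_zero (by positivity)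
  have hC4 : (∏ j ∈ Ico t m, cc ((K : ℤ) + 1 + j)) ≠ 0 := by
    apply prod_ne_zero_iff.mpr
    intro j _
    exact cc_ne_zero (by positivity)
  rw [f1_add, dd_add, hQ1, hQ2]
  have hddK := dd_ne_zero K
  have hI1 := f1_shift A K s
  set C1 := ∏ i ∈ range s, cc (A + 1 + (i : ℤ)) with hC1def
  set C2 := ∏ j ∈ range t, cc (A + (s : ℤ) - (K : ℤ) - (j : ℤ)) with hC2def
  set q1s := ∏ i ∈ range s, cc (A - (K : ℤ) + 1 + (i : ℤ)) with hq1def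
  set C3 := ∏ i ∈ Ico s m, cc (A - (K : ℤ) + 1 + (i : ℤ)) with hC3def
  set q2t := ∏ j ∈ range t, cc ((K : ℤ) + 1 + (j : ℤ)) with hq2def
  set C4 := ∏ j ∈ Ico t m, cc ((K : ℤ) + 1 + (j : ℤ)) with hC4def
  set FK := f1 A K with hFKdef
  set FSK := f1 (A + (s : ℤ)) K with hFSKdef
  set D0 := dd K with hD0def
  field_simp
  linear_combination hI1 * C2

/- ---------------- counting machinery ---------------- -/

section counting
variable {K V : Type*} [Field K] [AddCommGroup V] [Module K V]

lemma finrank_le_map_add_inf (φ : V →ₗ[K] V) (W : Submodule K V) [FiniteDimensional K W] :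
    Module.finrank K W ≤
      Module.finrank K (W.map φ) +
        Module.finrank K ((LinearMap.ker φ ⊓ W : Submodule K V)) := by
  classical
  set f := φ.comp W.subtype with hf
  have h1 := LinearMap.finrank_range_add_finrank_ker f
  have h2 : LinearMap.range f = W.map φ := by
    rw [hf, LinearMap.range_comp, Submodule.range_subtype]
  have h3 : LinearMap.ker f = Submodule.comap W.subtype (LinearMap.ker φ ⊓ W) := by
    rw [hf, LinearMap.ker_comp]
    ext x
    simp [Submodule.mem_comap, LinearMap.mem_ker]
  have e := Submodule.comapSubtypeEquivOfLe (inf_le_right : LinearMap.ker φ ⊓ W ≤ W)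
  rw [h2, h3] at h1
  rw [← h1, e.finrank_eq]

lemma finrank_le_sum_list (l : List (V →ₗ[K] V)) :
    ∀ (W : Submodule K V), FiniteDimensional K W →
      (∀ v ∈ W, (∀ φ ∈ l, φ v = 0) → v = 0) →
      Module.finrank K W ≤ (l.map fun φ => Module.finrank K (W.map φ)).sum := by
  induction l with
  | nil =>
      intro W _ h
      have hW : W = ⊥ := by
        rw [eq_bot_iff]
        intro v hv
        simp [h v hv (by simp)]
      simp [hW]
  | cons φ l ih =>
      intro W fdW h
      have hfd : FiniteDimensional K ((LinearMap.ker φ ⊓ W : Submodule K V)) :=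
        Submodule.finiteDimensional_of_le inf_le_right
      have step := finrank_le_map_add_inf φ W
      have ih' := ih (LinearMap.ker φ ⊓ W) hfd (by
        intro v hv hall
        exact h v hv.2 (by
          intro ψ hψ
          rcases List.mem_cons.mp hψ with rfl | hmem
          · exact hv.1
          · exact hall ψ hmem))
      have hsum :
          ((l.map fun ψ => Module.finrank K ((LinearMap.ker φ ⊓ W : Submodule K V).map ψ)).sum) ≤
          ((l.map fun ψ => Module.finrank K (W.map ψ)).sum) := by
        apply List.sum_le_sum
        intro ψ _
        haveI : Module.Finite K (W.map ψ) := Module.Finite.map W ψ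
        exact Submodule.finrank_mono (Submodule.map_mono inf_le_right)
      simp only [List.map_cons, List.sum_cons]
      omega
end counting

/- ---------------- span machinery ---------------- -/

def mono (e : Fin 3 → ℤ) : V3 := fun n => XX ^ (∑ i, e i * n i)

def bas (S : (Fin 3 → ℤ) → Prop) (ψ : V3) (e : Fin 3 → ℤ) : V3 :=
  fun n => if S n then mono e n * ψ n else 0

def basSet (S : (Fin 3 → ℤ) → Prop) (ψ : V3) (M : ℕ) : Set V3 :=
  bas S ψ '' {e | ∀ i, |e i| ≤ (M : ℤ)}

lemma basSet_mono (S : (Fin 3 → ℤ) → Prop) (ψ : V3) {M M' : ℕ} (h : M ≤ M') :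
    basSet S ψ M ⊆ basSet S ψ M' := by
  apply Set.image_mono
  intro e he i
  exact le_trans (he i) (by exact_mod_cast h)

lemma span_basSet_mono (S : (Fin 3 → ℤ) → Prop) (ψ : V3) {M M' : ℕ} (h : M ≤ M') :
    Submodule.span FF (basSet S ψ M) ≤ Submodule.span FF (basSet S ψ M') :=
  Submodule.span_mono (basSet_mono S ψ h)

lemma bas_mem_span (S : (Fin 3 → ℤ) → Prop) (ψ : V3) (M : ℕ) (e : Fin 3 → ℤ)
    (he : ∀ i, |e i| ≤ (M : ℤ)) : bas S ψ e ∈ Submodule.span FF (basSet S ψ M) :=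
  Submodule.subset_span ⟨e, he, rfl⟩

lemma mul_w_mem {S : (Fin 3 → ℤ) → Prop} {ψ : V3} {M : ℕ}
    (a : Fin 3 → ℤ) (ha : ∀ i, |a i| ≤ 1) (r₁ r₂ : FF)
    {h : V3} (hh : h ∈ Submodule.span FF (basSet S ψ M)) :
    (fun n => (r₁ * XX ^ (∑ i, a i * n i) + r₂ * XX ^ (-∑ i, a i * n i)) * h n)
      ∈ Submodule.span FF (basSet S ψ (M + 1)) := by
  induction hh using Submodule.span_induction with
  | mem x hx =>
      obtain ⟨e, he, rfl⟩ := hx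
      have key : (fun n => (r₁ * XX ^ (∑ i, a i * n i) + r₂ * XX ^ (-∑ i, a i * n i)) *
          bas S ψ e n) =
          r₁ • bas S ψ (fun i => e i + a i) + r₂ • bas S ψ (fun i => e i - a i) := by
        funext n
        by_cases hS : S n
        · simp only [bas, mono, if_pos hS, Pi.add_apply, Pi.smul_apply, smul_eq_mul]
          have h1 : (∑ i, (e i + a i) * n i) = (∑ i, e i * n i) + (∑ i, a i * n i) := by
            simp only [add_mul]; exact Finset.sum_add_distrib
          have h2 : (∑ i, (e i - a i) * n i) = (∑ i, e i * n i) + -(∑ i, a i * n i) := by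
            simp only [sub_mul]; rw [Finset.sum_sub_distrib]; ring
          rw [h1, h2, zpow_add₀ XX_ne_zero, zpow_add₀ XX_ne_zero]
          ring
        · simp [bas, if_neg hS]
      rw [key]
      apply Submodule.add_mem
      · exact Submodule.smul_mem _ _ (bas_mem_span S ψ (M + 1)
          (fun i => e i + a i) (fun i => by
            have h1 := he i; have h2 := ha i; have h3 := abs_add_le (e i) (a i)
            push_cast; omega))
      · exact Submodule.smul_mem _ _ (bas_mem_span S ψ (M + 1)
          (fun i => e i - a i) (fun i => by
            have h1 := he i; have h2 := ha i
            have h3 : |e i - a i| ≤ |e i| + |a i| := by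
              rw [sub_eq_add_neg]
              simpa using abs_add_le (e i) (-(a i))
            push_cast; omega))
  | zero =>
      have hz : (fun n => (r₁ * XX ^ (∑ i, a i * n i) + r₂ * XX ^ (-∑ i, a i * n i)) * (0 : V3) n)
          = (0 : V3) := by funext n; simp
      rw [hz]; exact Submodule.zero_mem _
  | add x y _ _ hx hy =>
      have : (fun n => (r₁ * XX ^ (∑ i, a i * n i) + r₂ * XX ^ (-∑ i, a i * n i)) * (x + y) n)
          = (fun n => (r₁ * XX ^ (∑ i, a i * n i) + r₂ * XX ^ (-∑ i, a i * n i)) * x n)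
          + (fun n => (r₁ * XX ^ (∑ i, a i * n i) + r₂ * XX ^ (-∑ i, a i * n i)) * y n) := by
        funext n; simp [mul_add]
      rw [this]; exact Submodule.add_mem _ hx hy
  | smul r x _ hx =>
      have : (fun n => (r₁ * XX ^ (∑ i, a i * n i) + r₂ * XX ^ (-∑ i, a i * n i)) * (r • x) n)
          = r • fun n => (r₁ * XX ^ (∑ i, a i * n i) + r₂ * XX ^ (-∑ i, a i * n i)) * x n := by
        funext n; simp [smul_eq_mul]; ring
      rw [this]; exact Submodule.smul_mem _ _ hx

lemma mul_prod_mem {S : (Fin 3 → ℤ) → Prop} {ψ : V3} {M : ℕ}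
    (a : Fin 3 → ℤ) (ha : ∀ i, |a i| ≤ 1) (c0 : ℕ → ℤ) (s : ℕ)
    {h : V3} (hh : h ∈ Submodule.span FF (basSet S ψ M)) :
    (fun n => (∏ i ∈ range s, cc ((∑ j, a j * n j) + c0 i)) * h n)
      ∈ Submodule.span FF (basSet S ψ (M + s)) := by
  induction s with
  | zero =>
      have : (fun n => (∏ i ∈ range 0, cc ((∑ j, a j * n j) + c0 i)) * h n) = h := by
        funext n; simp
      rw [this]; simpa using hh
  | succ s ih =>
      have step := mul_w_mem a ha (XX ^ (c0 s)) (-(XX ^ (-(c0 s)))) ih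
      have key : (fun n => (∏ i ∈ range (s+1), cc ((∑ j, a j * n j) + c0 i)) * h n)
          = (fun n => (XX ^ (c0 s) * XX ^ (∑ i, a i * n i) +
              (-(XX ^ (-(c0 s)))) * XX ^ (-∑ i, a i * n i)) *
              ((fun n' => (∏ i ∈ range s, cc ((∑ j, a j * n' j) + c0 i)) * h n') n)) := by
        funext n
        simp only [prod_range_succ]
        have hc : cc ((∑ j, a j * n j) + c0 s)
            = XX ^ (c0 s) * XX ^ (∑ i, a i * n i) +
              (-(XX ^ (-(c0 s)))) * XX ^ (-∑ i, a i * n i) := by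
          rw [cc, zpow_add₀ XX_ne_zero,
            show -((∑ j, a j * n j) + c0 s) = -(∑ j, a j * n j) + -(c0 s) by ring,
            zpow_add₀ XX_ne_zero]
          ring
        rw [hc]; ring
      rw [key]
      have hM : M + (s + 1) = (M + s) + 1 := by omega
      rw [hM]
      exact step

/- ---------------- restriction maps and pieces ---------------- -/

def resL (S : (Fin 3 → ℤ) → Prop) : V3 →ₗ[FF] V3 where
  toFun f := fun n => if S n then f n else 0
  map_add' f g := by funext n; by_cases h : S n <;> simp [h]
  map_smul' r f := by funext n; by_cases h : S n <;> simp [h]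

lemma resL_apply (S : (Fin 3 → ℤ) → Prop) (f : V3) (n : Fin 3 → ℤ) :
    resL S f n = if S n then f n else 0 := rfl

lemma Kfun_eq (p : Fin 3 → ℤ) (h : 0 ≤ p 1) :
    Kfun p = f1 (p 2 + p 0) (p 1).toNat / dd (p 1).toNat := by
  rw [Kfun, if_pos h, f1, dd, ← prod_div_distrib]
  rfl

lemma shiftZ_apply (α β : Fin 3 → ℕ) (n : Fin 3 → ℤ) :
    shiftZ ℚ α β Kfun n =
      XX ^ (∑ i, (α i : ℤ) * n i) * Kfun (fun i => n i + (β i : ℤ)) := rfl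

def S1p (m : ℕ) : (Fin 3 → ℤ) → Prop := fun n => n 1 + (m : ℤ) + 1 ≤ 0
def S2p (c : ℤ) : (Fin 3 → ℤ) → Prop := fun n => n 1 = c
def S34p (m : ℕ) : (Fin 3 → ℤ) → Prop :=
  fun n => (m : ℤ) + 1 ≤ n 1 ∧ ∀ i : ℕ, i < m → n 2 + n 0 - n 1 + 1 + (i : ℤ) ≠ 0
def S6p (m : ℕ) (d : ℤ) : (Fin 3 → ℤ) → Prop :=
  fun n => (m : ℤ) + 1 ≤ n 1 ∧ n 2 + n 0 - n 1 = d

def psi34 (m : ℕ) : V3 :=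
  fun n => Kfun n /
    ((∏ i ∈ range m, cc (n 2 + n 0 - n 1 + 1 + (i : ℤ))) *
      ∏ j ∈ range m, cc (n 1 + 1 + (j : ℤ)))

lemma sum3 (γ : Fin 3 → ℕ) : (∑ i, γ i) = γ 0 + γ 1 + γ 2 := by
  simp [Fin.sum_univ_three]

lemma res_S1_gen (m : ℕ) (α β : Fin 3 → ℕ) (hb : (∑ i, α i) + (∑ i, β i) ≤ m) :
    resL (S1p m) (shiftZ ℚ α β Kfun) = 0 := by
  have hb3 : α 0 + α 1 + α 2 + (β 0 + β 1 + β 2) ≤ m := by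
    rw [sum3, sum3] at hb; omega
  funext n
  rw [resL_apply]
  by_cases hS : S1p m n
  · rw [if_pos hS, shiftZ_apply]
    have hneg : ¬ (0 ≤ (fun i => n i + (β i : ℤ)) 1) := by
      simp only
      have := hS
      simp only [S1p] at this
      omega
    rw [Kfun, if_neg hneg, mul_zero]
    rfl
  · rw [if_neg hS]; rfl

/- finrank bound helper -/
lemma finrank_map_le_of_gen (W : Submodule FF V3) (gen : Set V3)
    (hW : W = Submodule.span FF gen) (φ : V3 →ₗ[FF] V3) (T : Finset V3)
    (h : ∀ g ∈ gen, φ g ∈ Submodule.span FF (T : Set V3)) :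
    Module.finrank FF (W.map φ) ≤ T.card := by
  have h1 : W.map φ ≤ Submodule.span FF (T : Set V3) := by
    rw [hW, Submodule.map_span, Submodule.span_le]
    rintro _ ⟨g, hg, rfl⟩
    exact h g hg
  haveI : FiniteDimensional FF (Submodule.span FF (T : Set V3)) :=
    FiniteDimensional.span_of_finite FF (T.finite_toSet)
  exact le_trans (Submodule.finrank_mono h1) (finrank_span_finset_le_card T)

/- finite dimensionality of FmZ -/
lemma genset_finite (m : ℕ) :
    ({ g | ∃ α β : Fin 3 → ℕ, (∑ i, α i) + (∑ i, β i) ≤ m ∧ g = shiftZ ℚ α β Kfun } :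
      Set V3).Finite := by
  have hsub : ({ g | ∃ α β : Fin 3 → ℕ, (∑ i, α i) + (∑ i, β i) ≤ m ∧ g = shiftZ ℚ α β Kfun } :
      Set V3) ⊆
      (fun q : (Fin 3 → ℕ) × (Fin 3 → ℕ) => shiftZ ℚ q.1 q.2 Kfun) ''
        ((Set.univ.pi fun _ => Set.Iic m) ×ˢ (Set.univ.pi fun _ => Set.Iic m)) := by
    rintro g ⟨α, β, hb, rfl⟩
    refine ⟨(α, β), ⟨?_, ?_⟩, rfl⟩
    · intro i _
      have h1 : α i ≤ ∑ j, α j := Finset.single_le_sum (fun j _ => Nat.zero_le _) (mem_univ i)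
      exact le_trans h1 (by omega)
    · intro i _
      have h1 : β i ≤ ∑ j, β j := Finset.single_le_sum (fun j _ => Nat.zero_le _) (mem_univ i)
      exact le_trans h1 (by omega)
  exact Set.Finite.subset (Set.Finite.image _
    (Set.Finite.prod (Set.Finite.pi fun _ => Set.finite_Iic m)
      (Set.Finite.pi fun _ => Set.finite_Iic m))) hsub

lemma fd_FmZ (m : ℕ) : FiniteDimensional FF (FmZ ℚ m Kfun) :=
  FiniteDimensional.span_of_finite FF (genset_finite m)

lemma res_S34_gen (m : ℕ) (α β : Fin 3 → ℕ) (hb : (∑ i, α i) + (∑ i, β i) ≤ m) :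
    resL (S34p m) (shiftZ ℚ α β Kfun) ∈
      Submodule.span FF (basSet (S34p m) (psi34 m) (3 * m)) := by
  have hb3 : α 0 + α 1 + α 2 + (β 0 + β 1 + β 2) ≤ m := by rw [sum3, sum3] at hb; omega
  set s := β 2 + β 0 with hsdef
  set t := β 1 with htdef
  have hsm : s ≤ m := by omega
  have htm : t ≤ m := by omega
  set αe : Fin 3 → ℤ := fun i => (α i : ℤ) with hαedef
  set F0 := bas (S34p m) (psi34 m) αe with hF0def
  have h0 : F0 ∈ Submodule.span FF (basSet (S34p m) (psi34 m) m) := by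
    rw [hF0def]
    apply bas_mem_span
    intro i
    have h1 : α i ≤ ∑ j, α j := Finset.single_le_sum (fun j _ => Nat.zero_le _) (mem_univ i)
    have h2 : α i ≤ m := by omega
    rw [hαedef]
    simp only []
    rw [abs_of_nonneg (Int.natCast_nonneg _)]
    exact_mod_cast h2
  have ha010 : ∀ i, |(![0,1,0] : Fin 3 → ℤ) i| ≤ 1 := by decide
  have ha101 : ∀ i, |(![1,0,1] : Fin 3 → ℤ) i| ≤ 1 := by decide
  have ha1m1 : ∀ i, |(![1,-1,1] : Fin 3 → ℤ) i| ≤ 1 := by decide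
  have h4 : (fun n => (∏ i ∈ range (m - t),
        cc ((∑ j, (![0,1,0] : Fin 3 → ℤ) j * n j) + ((t : ℤ) + 1 + (i : ℤ)))) * F0 n)
      ∈ Submodule.span FF (basSet (S34p m) (psi34 m) (m + (m - t))) :=
    mul_prod_mem _ ha010 _ _ h0
  set F4 : V3 := (fun n => (∏ i ∈ range (m - t),
        cc ((∑ j, (![0,1,0] : Fin 3 → ℤ) j * n j) + ((t : ℤ) + 1 + (i : ℤ)))) * F0 n) with hF4def
  have h3 : (fun n => (∏ i ∈ range (m - s),
        cc ((∑ j, (![1,-1,1] : Fin 3 → ℤ) j * n j) + ((s : ℤ) + 1 + (i : ℤ)))) * F4 n)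
      ∈ Submodule.span FF (basSet (S34p m) (psi34 m) (m + (m - t) + (m - s))) :=
    mul_prod_mem _ ha1m1 _ _ h4
  set F3 : V3 := (fun n => (∏ i ∈ range (m - s),
        cc ((∑ j, (![1,-1,1] : Fin 3 → ℤ) j * n j) + ((s : ℤ) + 1 + (i : ℤ)))) * F4 n) with hF3def
  have h2 : (fun n => (∏ i ∈ range t,
        cc ((∑ j, (![1,-1,1] : Fin 3 → ℤ) j * n j) + ((s : ℤ) - (i : ℤ)))) * F3 n)
      ∈ Submodule.span FF (basSet (S34p m) (psi34 m) (m + (m - t) + (m - s) + t)) :=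
    mul_prod_mem _ ha1m1 _ _ h3
  set F2 : V3 := (fun n => (∏ i ∈ range t,
        cc ((∑ j, (![1,-1,1] : Fin 3 → ℤ) j * n j) + ((s : ℤ) - (i : ℤ)))) * F3 n) with hF2def
  have h1 : (fun n => (∏ i ∈ range s,
        cc ((∑ j, (![1,0,1] : Fin 3 → ℤ) j * n j) + (1 + (i : ℤ)))) * F2 n)
      ∈ Submodule.span FF (basSet (S34p m) (psi34 m) (m + (m - t) + (m - s) + t + s)) :=
    mul_prod_mem _ ha101 _ _ h2
  set F1 : V3 := (fun n => (∏ i ∈ range s,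
        cc ((∑ j, (![1,0,1] : Fin 3 → ℤ) j * n j) + (1 + (i : ℤ)))) * F2 n) with hF1def
  have heq : resL (S34p m) (shiftZ ℚ α β Kfun) = F1 := by
    funext n
    rw [resL_apply]
    by_cases hS : S34p m n
    · rw [if_pos hS]
      have hSS := hS
      obtain ⟨hk1, hq⟩ := hS
      have hk0 : 0 ≤ n 1 := by omega
      set K := (n 1).toNat with hKdef
      have hn1K : n 1 = (K : ℤ) := by omega
      rw [shiftZ_apply]
      set p : Fin 3 → ℤ := fun i => n i + (β i : ℤ) with hpdef
      have hp1 : 0 ≤ p 1 := by rw [hpdef]; simp only []; omega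
      have e1 : Kfun p = f1 (n 2 + n 0 + (s : ℤ)) (K + t) / dd (K + t) := by
        rw [Kfun_eq p hp1]
        have hA : p 2 + p 0 = n 2 + n 0 + (s : ℤ) := by
          rw [hpdef]; simp only []; push_cast; omega
        have hT : (p 1).toNat = K + t := by
          rw [hpdef]; simp only []; omega
        rw [hA, hT]
      have e2 : Kfun n = f1 (n 2 + n 0) K / dd K := Kfun_eq n hk0
      rw [e1]
      simp only [hF1def, hF2def, hF3def, hF4def, hF0def, bas, if_pos hSS, mono, psi34,
        hαedef]
      rw [e2]
      have hP1 : (∏ i ∈ range s,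
          cc ((∑ j, (![1,0,1] : Fin 3 → ℤ) j * n j) + (1 + (i : ℤ)))) =
          ∏ i ∈ range s, cc (n 2 + n 0 + 1 + (i : ℤ)) := by
        apply prod_congr rfl; intro i _; congr 1
        simp [Fin.sum_univ_three]; ring
      have hP2 : (∏ i ∈ range t,
          cc ((∑ j, (![1,-1,1] : Fin 3 → ℤ) j * n j) + ((s : ℤ) - (i : ℤ)))) =
          ∏ j ∈ range t, cc (n 2 + n 0 + (s : ℤ) - (K : ℤ) - (j : ℤ)) := by
        apply prod_congr rfl; intro i _; congr 1
        simp [Fin.sum_univ_three]; omega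
      have hP3 : (∏ i ∈ range (m - s),
          cc ((∑ j, (![1,-1,1] : Fin 3 → ℤ) j * n j) + ((s : ℤ) + 1 + (i : ℤ)))) =
          ∏ i ∈ Ico s m, cc (n 2 + n 0 - (K : ℤ) + 1 + (i : ℤ)) := by
        rw [prod_Ico_eq_prod_range]
        apply prod_congr rfl; intro i _; congr 1
        simp [Fin.sum_univ_three]; push_cast; omega
      have hP4 : (∏ i ∈ range (m - t),
          cc ((∑ j, (![0,1,0] : Fin 3 → ℤ) j * n j) + ((t : ℤ) + 1 + (i : ℤ)))) =
          ∏ j ∈ Ico t m, cc ((K : ℤ) + 1 + (j : ℤ)) := by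
        rw [prod_Ico_eq_prod_range]
        apply prod_congr rfl; intro i _; congr 1
        simp [Fin.sum_univ_three]; push_cast; omega
      have hD1 : (∏ i ∈ range m, cc (n 2 + n 0 - n 1 + 1 + (i : ℤ))) =
          ∏ i ∈ range m, cc (n 2 + n 0 - (K : ℤ) + 1 + (i : ℤ)) := by
        apply prod_congr rfl; intro i _; congr 1; omega
      have hD2 : (∏ j ∈ range m, cc (n 1 + 1 + (j : ℤ))) =
          ∏ j ∈ range m, cc ((K : ℤ) + 1 + (j : ℤ)) := by
        apply prod_congr rfl; intro j _; congr 1; omega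
      rw [hP1, hP2, hP3, hP4, hD1, hD2]
      have hq' : ∀ i : ℕ, i < m → n 2 + n 0 - (K : ℤ) + 1 + (i : ℤ) ≠ 0 := by
        intro i him
        have := hq i him
        omega
      rw [key34 (n 2 + n 0) K s t m hsm htm hq']
      ring
    · rw [if_neg hS]
      simp [hF1def, hF2def, hF3def, hF4def, hF0def, bas, hS]
  rw [heq]
  exact span_basSet_mono _ _ (by omega) h1

/- ---------------- strip pieces ---------------- -/

def lo2 (M : ℕ) : Fin 3 → ℤ := fun i => if i = 1 then 0 else -(M : ℤ)
def hi2 (M : ℕ) : Fin 3 → ℤ := fun i => if i = 1 then 0 else (M : ℤ)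
def T2 (c : ℤ) (M : ℕ) : Finset V3 := (Finset.Icc (lo2 M) (hi2 M)).image (bas (S2p c) 1)

def lo6 (M : ℕ) : Fin 3 → ℤ := fun i => if i = 2 then 0 else -(2 * M : ℤ)
def hi6 (M : ℕ) : Fin 3 → ℤ := fun i => if i = 2 then 0 else (2 * M : ℤ)
def T6 (m : ℕ) (d : ℤ) (M : ℕ) : Finset V3 :=
  (Finset.Icc (lo6 M) (hi6 M)).image (bas (S6p m d) 1)

lemma card_T2 (c : ℤ) (M : ℕ) : (T2 c M).card ≤ (2 * M + 1) ^ 2 := by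
  refine le_trans Finset.card_image_le ?_
  rw [Pi.card_Icc, Fin.prod_univ_three]
  have c0 : (Finset.Icc (lo2 M 0) (hi2 M 0)).card = 2 * M + 1 := by
    rw [show lo2 M 0 = -(M : ℤ) from if_neg (by decide),
      show hi2 M 0 = (M : ℤ) from if_neg (by decide), Int.card_Icc]
    omega
  have c1 : (Finset.Icc (lo2 M 1) (hi2 M 1)).card = 1 := by
    rw [show lo2 M 1 = (0 : ℤ) from if_pos rfl,
      show hi2 M 1 = (0 : ℤ) from if_pos rfl, Int.card_Icc]
    rfl
  have c2 : (Finset.Icc (lo2 M 2) (hi2 M 2)).card = 2 * M + 1 := by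
    rw [show lo2 M 2 = -(M : ℤ) from if_neg (by decide),
      show hi2 M 2 = (M : ℤ) from if_neg (by decide), Int.card_Icc]
    omega
  rw [c0, c1, c2]
  exact le_of_eq (by ring)

lemma card_T6 (m : ℕ) (d : ℤ) (M : ℕ) : (T6 m d M).card ≤ (4 * M + 1) ^ 2 := by
  refine le_trans Finset.card_image_le ?_
  rw [Pi.card_Icc, Fin.prod_univ_three]
  have c0 : (Finset.Icc (lo6 M 0) (hi6 M 0)).card = 4 * M + 1 := by
    rw [show lo6 M 0 = -(2 * M : ℤ) from if_neg (by decide),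
      show hi6 M 0 = (2 * M : ℤ) from if_neg (by decide), Int.card_Icc]
    omega
  have c1 : (Finset.Icc (lo6 M 1) (hi6 M 1)).card = 4 * M + 1 := by
    rw [show lo6 M 1 = -(2 * M : ℤ) from if_neg (by decide),
      show hi6 M 1 = (2 * M : ℤ) from if_neg (by decide), Int.card_Icc]
    omega
  have c2 : (Finset.Icc (lo6 M 2) (hi6 M 2)).card = 1 := by
    rw [show lo6 M 2 = (0 : ℤ) from if_pos rfl,
      show hi6 M 2 = (0 : ℤ) from if_pos rfl, Int.card_Icc]
    rfl
  rw [c0, c1, c2]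
  exact le_of_eq (by ring)

lemma collapse2 (c : ℤ) (M : ℕ) :
    Submodule.span FF (basSet (S2p c) 1 M) ≤
      Submodule.span FF ((T2 c M : Finset V3) : Set V3) := by
  rw [Submodule.span_le]
  rintro _ ⟨e, he, rfl⟩
  set e' : Fin 3 → ℤ := fun i => if i = 1 then 0 else e i with he'def
  have hkey : bas (S2p c) 1 e = (XX ^ (e 1 * c)) • bas (S2p c) 1 e' := by
    funext n
    by_cases hS : S2p c n
    · have hn1 : n 1 = c := hS
      simp only [bas, if_pos hS, mono, Pi.smul_apply, smul_eq_mul, Pi.one_apply, mul_one]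
      rw [← zpow_add₀ XX_ne_zero]
      congr 1
      have hv0 : e' 0 = e 0 := if_neg (by decide)
      have hv1 : e' 1 = 0 := if_pos rfl
      have hv2 : e' 2 = e 2 := if_neg (by decide)
      simp only [Fin.sum_univ_three, hv0, hv1, hv2]
      rw [hn1]
      ring
    · simp [bas, if_neg hS]
  rw [hkey]
  apply Submodule.smul_mem
  apply Submodule.subset_span
  refine Finset.mem_coe.mpr (Finset.mem_image.mpr ⟨e', ?_, rfl⟩)
  rw [Finset.mem_Icc]
  have hb0 := abs_le.mp (he 0)
  have hb1 := abs_le.mp (he 1)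
  have hb2 := abs_le.mp (he 2)
  have hv0 : e' 0 = e 0 := if_neg (by decide)
  have hv1 : e' 1 = 0 := if_pos rfl
  have hv2 : e' 2 = e 2 := if_neg (by decide)
  constructor
  · intro i
    fin_cases i
    · show lo2 M 0 ≤ e' 0
      rw [hv0, show lo2 M 0 = -(M : ℤ) from if_neg (by decide)]; omega
    · show lo2 M 1 ≤ e' 1
      rw [hv1, show lo2 M 1 = (0 : ℤ) from if_pos rfl]
    · show lo2 M 2 ≤ e' 2
      rw [hv2, show lo2 M 2 = -(M : ℤ) from if_neg (by decide)]; omega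
  · intro i
    fin_cases i
    · show e' 0 ≤ hi2 M 0
      rw [hv0, show hi2 M 0 = (M : ℤ) from if_neg (by decide)]; omega
    · show e' 1 ≤ hi2 M 1
      rw [hv1, show hi2 M 1 = (0 : ℤ) from if_pos rfl]
    · show e' 2 ≤ hi2 M 2
      rw [hv2, show hi2 M 2 = (M : ℤ) from if_neg (by decide)]; omega

lemma collapse6 (m : ℕ) (d : ℤ) (M : ℕ) :
    Submodule.span FF (basSet (S6p m d) 1 M) ≤
      Submodule.span FF ((T6 m d M : Finset V3) : Set V3) := by
  rw [Submodule.span_le]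
  rintro _ ⟨e, he, rfl⟩
  set e' : Fin 3 → ℤ := fun i => if i = 2 then 0 else (if i = 0 then e 0 - e 2 else e 1 + e 2)
    with he'def
  have hkey : bas (S6p m d) 1 e = (XX ^ (e 2 * d)) • bas (S6p m d) 1 e' := by
    funext n
    by_cases hS : S6p m d n
    · have hn2 : n 2 = d + n 1 - n 0 := by
        have := hS.2; omega
      simp only [bas, if_pos hS, mono, Pi.smul_apply, smul_eq_mul, Pi.one_apply, mul_one]
      rw [← zpow_add₀ XX_ne_zero]
      congr 1
      have hv0 : e' 0 = e 0 - e 2 := by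
        show (if (0 : Fin 3) = 2 then (0:ℤ) else if (0 : Fin 3) = 0 then e 0 - e 2 else e 1 + e 2)
          = e 0 - e 2
        rw [if_neg (by decide), if_pos rfl]
      have hv1 : e' 1 = e 1 + e 2 := by
        show (if (1 : Fin 3) = 2 then (0:ℤ) else if (1 : Fin 3) = 0 then e 0 - e 2 else e 1 + e 2)
          = e 1 + e 2
        rw [if_neg (by decide), if_neg (by decide)]
      have hv2 : e' 2 = 0 := if_pos rfl
      simp only [Fin.sum_univ_three, hv0, hv1, hv2]
      rw [hn2]
      ring
    · simp [bas, if_neg hS]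
  rw [hkey]
  apply Submodule.smul_mem
  apply Submodule.subset_span
  refine Finset.mem_coe.mpr (Finset.mem_image.mpr ⟨e', ?_, rfl⟩)
  rw [Finset.mem_Icc]
  have hb0 := abs_le.mp (he 0)
  have hb1 := abs_le.mp (he 1)
  have hb2 := abs_le.mp (he 2)
  have hv0 : e' 0 = e 0 - e 2 := by
    show (if (0 : Fin 3) = 2 then (0:ℤ) else if (0 : Fin 3) = 0 then e 0 - e 2 else e 1 + e 2)
      = e 0 - e 2
    rw [if_neg (by decide), if_pos rfl]
  have hv1 : e' 1 = e 1 + e 2 := by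
    show (if (1 : Fin 3) = 2 then (0:ℤ) else if (1 : Fin 3) = 0 then e 0 - e 2 else e 1 + e 2)
      = e 1 + e 2
    rw [if_neg (by decide), if_neg (by decide)]
  have hv2 : e' 2 = 0 := if_pos rfl
  constructor
  · intro i
    fin_cases i
    · show lo6 M 0 ≤ e' 0
      rw [hv0, show lo6 M 0 = -(2 * M : ℤ) from if_neg (by decide)]; omega
    · show lo6 M 1 ≤ e' 1
      rw [hv1, show lo6 M 1 = -(2 * M : ℤ) from if_neg (by decide)]; omega
    · show lo6 M 2 ≤ e' 2
      rw [hv2, show lo6 M 2 = (0 : ℤ) from if_pos rfl]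
  · intro i
    fin_cases i
    · show e' 0 ≤ hi6 M 0
      rw [hv0, show hi6 M 0 = (2 * M : ℤ) from if_neg (by decide)]; omega
    · show e' 1 ≤ hi6 M 1
      rw [hv1, show hi6 M 1 = (2 * M : ℤ) from if_neg (by decide)]; omega
    · show e' 2 ≤ hi6 M 2
      rw [hv2, show hi6 M 2 = (0 : ℤ) from if_pos rfl]

lemma res_S2_gen (m : ℕ) (c : ℤ) (hc : c ≤ (m : ℤ)) (α β : Fin 3 → ℕ)
    (hb : (∑ i, α i) + (∑ i, β i) ≤ m) :
    resL (S2p c) (shiftZ ℚ α β Kfun) ∈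
      Submodule.span FF ((T2 c (3 * m) : Finset V3) : Set V3) := by
  have hb3 : α 0 + α 1 + α 2 + (β 0 + β 1 + β 2) ≤ m := by rw [sum3, sum3] at hb; omega
  set s := β 2 + β 0 with hsdef
  set t := β 1 with htdef
  set αe : Fin 3 → ℤ := fun i => (α i : ℤ) with hαedef
  have hαb : ∀ i, |αe i| ≤ (m : ℤ) := by
    intro i
    have h1 : α i ≤ ∑ j, α j := Finset.single_le_sum (fun j _ => Nat.zero_le _) (mem_univ i)
    have h2 : α i ≤ m := by omega
    rw [hαedef]
    simp only []
    rw [abs_of_nonneg (Int.natCast_nonneg _)]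
    exact_mod_cast h2
  by_cases hct : 0 ≤ c + (t : ℤ)
  · set T0 := (c + (t : ℤ)).toNat with hT0def
    have hT0le : T0 ≤ 2 * m := by omega
    set F0 := bas (S2p c) 1 αe with hF0def
    have h0 : F0 ∈ Submodule.span FF (basSet (S2p c) 1 m) := by
      rw [hF0def]; exact bas_mem_span _ _ _ _ hαb
    have ha101 : ∀ i, |(![1,0,1] : Fin 3 → ℤ) i| ≤ 1 := by decide
    have hmul : (fun n => (∏ j ∈ range T0,
          cc ((∑ i, (![1,0,1] : Fin 3 → ℤ) i * n i) + ((s : ℤ) - (j : ℤ)))) * F0 n)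
        ∈ Submodule.span FF (basSet (S2p c) 1 (m + T0)) :=
      mul_prod_mem _ ha101 _ _ h0
    set F : V3 := (fun n => (∏ j ∈ range T0,
          cc ((∑ i, (![1,0,1] : Fin 3 → ℤ) i * n i) + ((s : ℤ) - (j : ℤ)))) * F0 n) with hFdef
    have hsc : (dd T0)⁻¹ • F ∈ Submodule.span FF (basSet (S2p c) 1 (m + T0)) :=
      Submodule.smul_mem _ _ hmul
    have heq : resL (S2p c) (shiftZ ℚ α β Kfun) = (dd T0)⁻¹ • F := by
      funext n
      rw [resL_apply]
      by_cases hS : S2p c n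
      · rw [if_pos hS]
        have hn1 : n 1 = c := hS
        rw [shiftZ_apply]
        set p : Fin 3 → ℤ := fun i => n i + (β i : ℤ) with hpdef
        have hp1 : 0 ≤ p 1 := by rw [hpdef]; simp only []; omega
        have e1 : Kfun p = f1 (n 2 + n 0 + (s : ℤ)) T0 / dd T0 := by
          rw [Kfun_eq p hp1]
          have hA : p 2 + p 0 = n 2 + n 0 + (s : ℤ) := by
            rw [hpdef]; simp only []; push_cast; omega
          have hT : (p 1).toNat = T0 := by
            rw [hpdef]; simp only []; omega
          rw [hA, hT]
        rw [e1]
        simp only [Pi.smul_apply, smul_eq_mul, hFdef, hF0def, bas, if_pos hS, mono,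
          Pi.one_apply, hαedef]
        have hP : (∏ j ∈ range T0,
            cc ((∑ i, (![1,0,1] : Fin 3 → ℤ) i * n i) + ((s : ℤ) - (j : ℤ)))) =
            f1 (n 2 + n 0 + (s : ℤ)) T0 := by
          rw [f1]
          apply prod_congr rfl; intro j _; congr 1
          simp [Fin.sum_univ_three]; ring
        rw [hP, div_eq_mul_inv]
        ring
      · rw [if_neg hS]
        simp [hFdef, hF0def, bas, hS]
    rw [heq]
    exact collapse2 c (3 * m) (span_basSet_mono _ _ (by omega) hsc)
  · have hzero : resL (S2p c) (shiftZ ℚ α β Kfun) = 0 := by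
      funext n
      rw [resL_apply]
      by_cases hS : S2p c n
      · rw [if_pos hS, shiftZ_apply]
        have hn1 : n 1 = c := hS
        have hneg : ¬ (0 ≤ (fun i => n i + (β i : ℤ)) 1) := by
          simp only []
          omega
        rw [Kfun, if_neg hneg, mul_zero]
        rfl
      · rw [if_neg hS]; rfl
    rw [hzero]
    exact Submodule.zero_mem _

lemma res_S6_gen (m : ℕ) (d : ℤ) (hd1 : -(m : ℤ) ≤ d) (hd2 : d ≤ (m : ℤ))
    (α β : Fin 3 → ℕ) (hb : (∑ i, α i) + (∑ i, β i) ≤ m) :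
    resL (S6p m d) (shiftZ ℚ α β Kfun) ∈
      Submodule.span FF ((T6 m d (3 * m) : Finset V3) : Set V3) := by
  have hb3 : α 0 + α 1 + α 2 + (β 0 + β 1 + β 2) ≤ m := by rw [sum3, sum3] at hb; omega
  set s := β 2 + β 0 with hsdef
  set t := β 1 with htdef
  set αe : Fin 3 → ℤ := fun i => (α i : ℤ) with hαedef
  have hαb : ∀ i, |αe i| ≤ (m : ℤ) := by
    intro i
    have h1 : α i ≤ ∑ j, α j := Finset.single_le_sum (fun j _ => Nat.zero_le _) (mem_univ i)
    have h2 : α i ≤ m := by omega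
    rw [hαedef]
    simp only []
    rw [abs_of_nonneg (Int.natCast_nonneg _)]
    exact_mod_cast h2
  by_cases he : 0 ≤ d + (s : ℤ) - (t : ℤ)
  · set E0 := (d + (s : ℤ) - (t : ℤ)).toNat with hE0def
    have hE0le : E0 ≤ 2 * m := by omega
    set F0 := bas (S6p m d) 1 αe with hF0def
    have h0 : F0 ∈ Submodule.span FF (basSet (S6p m d) 1 m) := by
      rw [hF0def]; exact bas_mem_span _ _ _ _ hαb
    have ha101 : ∀ i, |(![1,0,1] : Fin 3 → ℤ) i| ≤ 1 := by decide
    have hmul : (fun n => (∏ j ∈ range E0,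
          cc ((∑ i, (![1,0,1] : Fin 3 → ℤ) i * n i) + ((s : ℤ) - (j : ℤ)))) * F0 n)
        ∈ Submodule.span FF (basSet (S6p m d) 1 (m + E0)) :=
      mul_prod_mem _ ha101 _ _ h0
    set F : V3 := (fun n => (∏ j ∈ range E0,
          cc ((∑ i, (![1,0,1] : Fin 3 → ℤ) i * n i) + ((s : ℤ) - (j : ℤ)))) * F0 n) with hFdef
    have hsc : (dd E0)⁻¹ • F ∈ Submodule.span FF (basSet (S6p m d) 1 (m + E0)) :=
      Submodule.smul_mem _ _ hmul
    have heq : resL (S6p m d) (shiftZ ℚ α β Kfun) = (dd E0)⁻¹ • F := by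
      funext n
      rw [resL_apply]
      by_cases hS : S6p m d n
      · rw [if_pos hS]
        have hSS := hS
        obtain ⟨hk1, hdn⟩ := hS
        have hk0 : 0 ≤ n 1 := by omega
        set K := (n 1).toNat with hKdef
        have hn1K : n 1 = (K : ℤ) := by omega
        rw [shiftZ_apply]
        set p : Fin 3 → ℤ := fun i => n i + (β i : ℤ) with hpdef
        have hp1 : 0 ≤ p 1 := by rw [hpdef]; simp only []; omega
        set A' := n 2 + n 0 + (s : ℤ) with hA'def
        have hA'0 : 0 ≤ A' := by omega
        have e1 : Kfun p = f1 A' (K + t) / dd (K + t) := by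
          rw [Kfun_eq p hp1]
          have hA : p 2 + p 0 = A' := by
            rw [hpdef, hA'def]; simp only []; push_cast; omega
          have hT : (p 1).toNat = K + t := by
            rw [hpdef]; simp only []; omega
          rw [hA, hT]
        have e2 : Kfun p = f1 A' E0 / dd E0 := by
          rw [e1, div_eq_div_iff (dd_ne_zero _) (dd_ne_zero _)]
          have hs1 := f1_sym A' (K + t) hA'0 (by push_cast; omega)
          have hs2 := f1_sym A' E0 hA'0 (by push_cast; omega)
          have e3 : (A' - ((K + t : ℕ) : ℤ)).toNat = E0 := by push_cast; omega
          have e4 : (A' - ((E0 : ℕ) : ℤ)).toNat = K + t := by push_cast; omega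
          rw [e3] at hs1
          rw [e4] at hs2
          linear_combination hs1 - hs2
        rw [e2]
        simp only [Pi.smul_apply, smul_eq_mul, hFdef, hF0def, bas, if_pos hSS, mono,
          Pi.one_apply, hαedef]
        have hP : (∏ j ∈ range E0,
            cc ((∑ i, (![1,0,1] : Fin 3 → ℤ) i * n i) + ((s : ℤ) - (j : ℤ)))) =
            f1 A' E0 := by
          rw [f1]
          apply prod_congr rfl; intro j _; congr 1
          rw [hA'def]
          simp [Fin.sum_univ_three]; ring
        rw [hP, div_eq_mul_inv]
        ring
      · rw [if_neg hS]
        simp [hFdef, hF0def, bas, hS]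
    rw [heq]
    exact collapse6 m d (3 * m) (span_basSet_mono _ _ (by omega) hsc)
  · have hzero : resL (S6p m d) (shiftZ ℚ α β Kfun) = 0 := by
      funext n
      rw [resL_apply]
      by_cases hS : S6p m d n
      · rw [if_pos hS, shiftZ_apply]
        obtain ⟨hk1, hdn⟩ := hS
        have hk0 : 0 ≤ n 1 := by omega
        set K := (n 1).toNat with hKdef
        have hn1K : n 1 = (K : ℤ) := by omega
        set p : Fin 3 → ℤ := fun i => n i + (β i : ℤ) with hpdef
        have hp1 : 0 ≤ p 1 := by rw [hpdef]; simp only []; omega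
        have e1 : Kfun p = f1 (n 2 + n 0 + (s : ℤ)) (K + t) / dd (K + t) := by
          rw [Kfun_eq p hp1]
          have hA : p 2 + p 0 = n 2 + n 0 + (s : ℤ) := by
            rw [hpdef]; simp only []; push_cast; omega
          have hT : (p 1).toNat = K + t := by
            rw [hpdef]; simp only []; omega
          rw [hA, hT]
        have hzeroN : f1 (n 2 + n 0 + (s : ℤ)) (K + t) = 0 := by
          rw [f1]
          have hj0 : (n 2 + n 0 + (s : ℤ)).toNat ∈ range (K + t) := by
            rw [mem_range]; omega
          apply prod_eq_zero hj0
          have : n 2 + n 0 + (s : ℤ) - ((n 2 + n 0 + (s : ℤ)).toNat : ℤ) = 0 := by omega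
          rw [this, cc_zero]
        rw [e1, hzeroN, zero_div, mul_zero]
        rfl
      · rw [if_neg hS]; rfl
    rw [hzero]
    exact Submodule.zero_mem _

lemma cover (m : ℕ) (v : V3)
    (h1 : resL (S1p m) v = 0)
    (h2 : ∀ c ∈ Finset.Icc (-(m : ℤ)) (m : ℤ), resL (S2p c) v = 0)
    (h34 : resL (S34p m) v = 0)
    (h6 : ∀ d ∈ Finset.Icc (-(m : ℤ)) (-1 : ℤ), resL (S6p m d) v = 0) : v = 0 := by
  funext n
  show v n = (0 : V3) n
  by_cases hc1 : n 1 + (m : ℤ) + 1 ≤ 0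
  · have hthis := congrFun h1 n
    rw [resL_apply, if_pos (show S1p m n from hc1)] at hthis
    exact hthis
  · by_cases hc2 : n 1 ≤ (m : ℤ)
    · have hmem : n 1 ∈ Finset.Icc (-(m : ℤ)) (m : ℤ) := mem_Icc.mpr ⟨by omega, hc2⟩
      have hthis := congrFun (h2 (n 1) hmem) n
      rw [resL_apply, if_pos (show S2p (n 1) n from rfl)] at hthis
      exact hthis
    · by_cases hc3 : ∀ i : ℕ, i < m → n 2 + n 0 - n 1 + 1 + (i : ℤ) ≠ 0
      · have hthis := congrFun h34 n
        rw [resL_apply, if_pos (show S34p m n from ⟨by omega, hc3⟩)] at hthis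
        exact hthis
      · push_neg at hc3
        obtain ⟨i, him, hieq⟩ := hc3
        have hdmem : (n 2 + n 0 - n 1) ∈ Finset.Icc (-(m : ℤ)) (-1 : ℤ) :=
          mem_Icc.mpr ⟨by omega, by omega⟩
        have hthis := congrFun (h6 (n 2 + n 0 - n 1) hdmem) n
        rw [resL_apply, if_pos (show S6p m (n 2 + n 0 - n 1) n from ⟨by omega, rfl⟩)] at hthis
        exact hthis

def T34 (m : ℕ) : Finset V3 :=
  (Finset.Icc (fun _ => -(3 * (m : ℤ))) (fun _ => (3 * (m : ℤ)))).image
    (bas (S34p m) (psi34 m))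

lemma basSet_subset_T34 (m : ℕ) :
    basSet (S34p m) (psi34 m) (3 * m) ⊆ ((T34 m : Finset V3) : Set V3) := by
  rintro _ ⟨e, he, rfl⟩
  refine Finset.mem_coe.mpr (Finset.mem_image.mpr ⟨e, ?_, rfl⟩)
  rw [Finset.mem_Icc]
  constructor <;> intro i <;> have hh := abs_le.mp (he i) <;>
    (simp only []; push_cast at hh ⊢; omega)

lemma card_T34 (m : ℕ) : (T34 m).card ≤ (6 * m + 1) ^ 3 := by
  refine le_trans Finset.card_image_le ?_
  rw [Pi.card_Icc]
  have hc : ∀ i : Fin 3, (Finset.Icc ((fun (_ : Fin 3) => -(3 * (m : ℤ))) i)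
      ((fun (_ : Fin 3) => (3 * (m : ℤ))) i)).card = 6 * m + 1 := by
    intro i
    show (Finset.Icc (-(3 * (m : ℤ))) (3 * (m : ℤ))).card = 6 * m + 1
    rw [Int.card_Icc]
    omega
  calc (∏ i : Fin 3, (Finset.Icc ((fun (_ : Fin 3) => -(3 * (m : ℤ))) i)
      ((fun (_ : Fin 3) => (3 * (m : ℤ))) i)).card)
      = ∏ _i : Fin 3, (6 * m + 1) := by
        apply prod_congr rfl; intro i _; exact hc i
    _ = (6 * m + 1) ^ 3 := by
        rw [prod_const]
        norm_num
    _ ≤ (6 * m + 1) ^ 3 := le_refl _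

end QHolK

theorem qholonomic_K : IsQHolonomicZ ℚ Kfun := by
  classical
  constructor
  · intro m
    exact QHolK.fd_FmZ m
  · refine ⟨1000, fun m => ?_⟩
    haveI := QHolK.fd_FmZ m
    set W := FmZ ℚ m Kfun with hWdef
    have hWgen : W = Submodule.span QHolK.FF
        { g | ∃ α β : Fin 3 → ℕ, (∑ i, α i) + (∑ i, β i) ≤ m ∧ g = shiftZ ℚ α β Kfun } := rfl
    set l2 : List (QHolK.V3 →ₗ[QHolK.FF] QHolK.V3) :=
      ((Finset.Icc (-(m : ℤ)) (m : ℤ)).toList.map fun c => QHolK.resL (QHolK.S2p c)) with hl2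
    set l6 : List (QHolK.V3 →ₗ[QHolK.FF] QHolK.V3) :=
      ((Finset.Icc (-(m : ℤ)) (-1 : ℤ)).toList.map fun d => QHolK.resL (QHolK.S6p m d)) with hl6
    set l : List (QHolK.V3 →ₗ[QHolK.FF] QHolK.V3) :=
      QHolK.resL (QHolK.S1p m) :: QHolK.resL (QHolK.S34p m) :: (l2 ++ l6) with hl
    have hcov : ∀ v ∈ W, (∀ φ ∈ l, φ v = 0) → v = 0 := by
      intro v _ hall
      apply QHolK.cover m v
      · exact hall _ (by rw [hl]; exact List.mem_cons_self)
      · intro c hc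
        refine hall _ ?_
        rw [hl]
        refine List.mem_cons_of_mem _ (List.mem_cons_of_mem _ (List.mem_append_left _ ?_))
        rw [hl2]
        exact List.mem_map.mpr ⟨c, Finset.mem_toList.mpr hc, rfl⟩
      · exact hall _ (by rw [hl]; exact List.mem_cons_of_mem _ (List.mem_cons_self))
      · intro d hd
        refine hall _ ?_
        rw [hl]
        refine List.mem_cons_of_mem _ (List.mem_cons_of_mem _ (List.mem_append_right _ ?_))
        rw [hl6]
        exact List.mem_map.mpr ⟨d, Finset.mem_toList.mpr hd, rfl⟩
    have hmain := QHolK.finrank_le_sum_list l W (QHolK.fd_FmZ m) hcov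
    -- bound each term
    have b1 : Module.finrank QHolK.FF (W.map (QHolK.resL (QHolK.S1p m))) = 0 := by
      have hbot : W.map (QHolK.resL (QHolK.S1p m)) = ⊥ := by
        rw [hWgen, Submodule.map_span, eq_bot_iff, Submodule.span_le]
        rintro _ ⟨g, ⟨α, β, hb, rfl⟩, rfl⟩
        rw [QHolK.res_S1_gen m α β hb]
        simp
      rw [hbot]
      exact finrank_bot _ _
    have b34 : Module.finrank QHolK.FF (W.map (QHolK.resL (QHolK.S34p m))) ≤
        (6 * m + 1) ^ 3 := by
      refine le_trans (QHolK.finrank_map_le_of_gen W _ hWgen _ (QHolK.T34 m) ?_)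
        (QHolK.card_T34 m)
      rintro g ⟨α, β, hb, rfl⟩
      have h := QHolK.res_S34_gen m α β hb
      exact Submodule.span_mono (QHolK.basSet_subset_T34 m) h
    have b2 : ∀ φ ∈ l2.map (fun ψ => Module.finrank QHolK.FF (W.map ψ)),
        φ ≤ (6 * m + 1) ^ 2 := by
      intro x hx
      rw [hl2, List.map_map] at hx
      obtain ⟨c, hcmem, rfl⟩ := List.mem_map.mp hx
      have hc : c ≤ (m : ℤ) := (Finset.mem_Icc.mp (Finset.mem_toList.mp hcmem)).2
      simp only [Function.comp]
      refine le_trans (QHolK.finrank_map_le_of_gen W _ hWgen _ (QHolK.T2 c (3 * m)) ?_)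
        ?_
      · rintro g ⟨α, β, hb, rfl⟩
        exact QHolK.res_S2_gen m c hc α β hb
      · refine le_trans (QHolK.card_T2 c (3 * m)) ?_
        have : 2 * (3 * m) + 1 = 6 * m + 1 := by omega
        rw [this]
    have b6 : ∀ φ ∈ l6.map (fun ψ => Module.finrank QHolK.FF (W.map ψ)),
        φ ≤ (12 * m + 1) ^ 2 := by
      intro x hx
      rw [hl6, List.map_map] at hx
      obtain ⟨d, hdmem, rfl⟩ := List.mem_map.mp hx
      have hd := Finset.mem_Icc.mp (Finset.mem_toList.mp hdmem)
      simp only [Function.comp]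
      refine le_trans (QHolK.finrank_map_le_of_gen W _ hWgen _ (QHolK.T6 m d (3 * m)) ?_)
        ?_
      · rintro g ⟨α, β, hb, rfl⟩
        exact QHolK.res_S6_gen m d hd.1 (le_trans hd.2 (by omega)) α β hb
      · refine le_trans (QHolK.card_T6 m d (3 * m)) ?_
        have : 4 * (3 * m) + 1 = 12 * m + 1 := by omega
        rw [this]
    have hs2 : (l2.map (fun ψ => Module.finrank QHolK.FF (W.map ψ))).sum ≤
        (2 * m + 1) * (6 * m + 1) ^ 2 := by
      have hlen : (l2.map (fun ψ => Module.finrank QHolK.FF (W.map ψ))).length = 2 * m + 1 := by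
        rw [List.length_map, hl2, List.length_map, Finset.length_toList, Int.card_Icc]
        omega
      have := List.sum_le_card_nsmul _ _ b2
      rw [hlen] at this
      simpa [smul_eq_mul] using this
    have hs6 : (l6.map (fun ψ => Module.finrank QHolK.FF (W.map ψ))).sum ≤
        m * (12 * m + 1) ^ 2 := by
      have hlen : (l6.map (fun ψ => Module.finrank QHolK.FF (W.map ψ))).length = m := by
        rw [List.length_map, hl6, List.length_map, Finset.length_toList, Int.card_Icc]
        omega
      have := List.sum_le_card_nsmul _ _ b6
      rw [hlen] at this
      simpa [smul_eq_mul] using this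
    rw [hl] at hmain
    simp only [List.map_cons, List.sum_cons, List.map_append, List.sum_append] at hmain
    have htot : Module.finrank QHolK.FF W ≤
        0 + ((6 * m + 1) ^ 3 + ((2 * m + 1) * (6 * m + 1) ^ 2 + m * (12 * m + 1) ^ 2)) := by
      rw [← b1]
      exact le_trans hmain (by
        apply Nat.add_le_add_left
        exact Nat.add_le_add b34 (Nat.add_le_add hs2 hs6))
    refine le_trans htot ?_
    have hpow : (m + 1) ^ 3 = m ^ 3 + 3 * m ^ 2 + 3 * m + 1 := by ring
    nlinarith [Nat.zero_le m, sq_nonneg m]
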